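/- (Bass) Let R be a semilocal ring (not necessarily commutative), I a left ideal of R, and a ∈ R such that Ra + I = R. Then the coset a + I contains a unit of R. -/

import Mathlib

section Helpers
variable {Q : Type*} [Ring Q] {M : Type*} [AddCommGroup M] [Module Q M]

/-- The sup of two disjoint submodules is isomorphic to their product. -/
noncomputable def supEquivProd {p q : Submodule Q M} (h : Disjoint p q) :
    (p × q) ≃ₗ[Q] ↥(p ⊔ q) :=
  have hinj : Function.Injective (p.subtype.coprod q.subtype) := by
    intro x y hxy
    obtain ⟨a, b⟩ := x; obtain ⟨a', b'⟩ := y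
    simp only [LinearMap.coprod_apply, Submodule.coe_subtype] at hxy
    have key : (a : M) - (a' : M) = (b' : M) - (b : M) :=
      sub_eq_sub_iff_add_eq_add.mpr (by rw [hxy, add_comm])
    have hmem : (a : M) - (a' : M) ∈ p ⊓ q :=
      ⟨sub_mem a.2 a'.2, key ▸ sub_mem b'.2 b.2⟩
    rw [h.eq_bot, Submodule.mem_bot] at hmem
    have h1 : (a : M) = a' := by rw [← sub_eq_zero]; exact hmem
    have h2 : (b : M) = b' := by
      have := key.symm.trans hmem
      rw [sub_eq_zero] at this; exact this.symm
    exact Prod.ext (Subtype.ext h1) (Subtype.ext h2)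
  (LinearEquiv.ofInjective _ hinj).trans
    (LinearEquiv.ofEq _ _ (by
      rw [LinearMap.range_coprod, Submodule.range_subtype, Submodule.range_subtype]))

lemma exists_relcompl [IsSemisimpleModule Q M] {p P : Submodule Q M} (hle : p ≤ P) :
    ∃ q ≤ P, p ⊓ q = ⊥ ∧ p ⊔ q = P := by
  obtain ⟨q', hq'⟩ := exists_isCompl (p.comap P.subtype)
  have hp : Submodule.map P.subtype (p.comap P.subtype) = p := by
    rw [Submodule.map_comap_subtype, inf_eq_right.mpr hle]
  refine ⟨q'.map P.subtype, Submodule.map_subtype_le P q', ?_, ?_⟩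
  · rw [← hp, ← Submodule.map_inf _ (Submodule.injective_subtype P), hq'.inf_eq_bot,
      Submodule.map_bot]
  · rw [← hp, ← Submodule.map_sup, hq'.sup_eq_top, Submodule.map_top,
      Submodule.range_subtype]

end Helpers

section SimpleCancel
variable {Q : Type*} [Ring Q] [IsSemisimpleRing Q]
variable {X B B' : Type*} [AddCommGroup X] [Module Q X] [AddCommGroup B] [Module Q B]
  [AddCommGroup B'] [Module Q B']

open LinearMap Submodule

lemma cancelSimple [IsSimpleModule Q X] (ψ : (X × B) ≃ₗ[Q] (X × B')) :
    Nonempty (B ≃ₗ[Q] B') := by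
  classical
  set f : X →ₗ[Q] (X × B') := (↑ψ : (X × B) →ₗ[Q] X × B') ∘ₗ LinearMap.inl Q X B with hfdef
  have hfinj : Function.Injective f := ψ.injective.comp LinearMap.inl_injective
  set α : X →ₗ[Q] X := LinearMap.fst Q X B' ∘ₗ f with hadef
  set XN : Submodule Q (X × B') := LinearMap.range f with hXNdef
  have hmap : (LinearMap.range (LinearMap.inl Q X B)).map
      (↑ψ : (X × B) →ₗ[Q] X × B') = XN := by
    rw [hXNdef, hfdef, LinearMap.range_comp]
  have qe : ((X × B) ⧸ LinearMap.range (LinearMap.inl Q X B)) ≃ₗ[Q] ((X × B') ⧸ XN) :=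
    Submodule.Quotient.equiv _ _ ψ hmap
  have eB : B ≃ₗ[Q] ((X × B) ⧸ LinearMap.range (LinearMap.inl Q X B)) :=
    (LinearEquiv.ofInjective (LinearMap.inr Q X B) LinearMap.inr_injective).trans
      (quotientEquivOfIsCompl _ _ LinearMap.isCompl_range_inl_inr).symm
  have hfst : ∀ x : X, (f x).1 = α x := fun x => rfl
  rcases eq_bot_or_eq_top (LinearMap.ker α) with hker | hker
  · -- α injective, hence bijective
    have hαinj : Function.Injective α := LinearMap.ker_eq_bot.mp hker
    have hrange : LinearMap.range α = ⊤ := by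
      rcases eq_bot_or_eq_top (LinearMap.range α) with hb | ht
      · exfalso
        have : Nontrivial X := IsSimpleModule.nontrivial Q X
        obtain ⟨x, hx⟩ := exists_ne (0 : X)
        have h1 : α x = 0 := by
          have : α x ∈ LinearMap.range α := LinearMap.mem_range_self α x
          rwa [hb, Submodule.mem_bot] at this
        exact hx (hαinj (by rw [h1, map_zero]))
      · exact ht
    have hαsurj : Function.Surjective α := LinearMap.range_eq_top.mp hrange
    have hdisj : Disjoint XN (LinearMap.range (LinearMap.inr Q X B')) := by
      rw [Submodule.disjoint_def]
      rintro y ⟨x₀, rfl⟩ hy2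
      rw [LinearMap.range_inr, LinearMap.mem_ker] at hy2
      have h0 : α x₀ = 0 := by rw [← hfst]; exact hy2
      have : x₀ = 0 := hαinj (by rw [h0, map_zero])
      rw [this, map_zero]
    have hcod : Codisjoint XN (LinearMap.range (LinearMap.inr Q X B')) := by
      rw [codisjoint_iff, Submodule.eq_top_iff']
      rintro ⟨x, b'⟩
      obtain ⟨x₀, hx₀⟩ := hαsurj x
      refine Submodule.mem_sup.mpr ⟨f x₀, LinearMap.mem_range_self f x₀,
        (0, b' - (f x₀).2), ⟨b' - (f x₀).2, rfl⟩, ?_⟩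
      ext
      · show (f x₀).1 + 0 = x
        rw [hfst, hx₀, add_zero]
      · show (f x₀).2 + (b' - (f x₀).2) = b'
        abel
    exact ⟨eB.trans <| qe.trans <| (quotientEquivOfIsCompl XN _ ⟨hdisj, hcod⟩).trans
      (LinearEquiv.ofInjective (LinearMap.inr Q X B') LinearMap.inr_injective).symm⟩
  · -- α = 0
    have hα0 : ∀ x, α x = 0 := fun x => by
      have : x ∈ LinearMap.ker α := by rw [hker]; trivial
      exact this
    have hXN_le : XN ≤ LinearMap.range (LinearMap.inr Q X B') := by
      rintro y ⟨x₀, rfl⟩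
      rw [LinearMap.range_inr, LinearMap.mem_ker]
      exact hα0 x₀
    set X₂ : Submodule Q B' := XN.comap (LinearMap.inr Q X B') with hX₂def
    have hmap₂ : X₂.map (LinearMap.inr Q X B') = XN := by
      rw [hX₂def, Submodule.map_comap_eq, inf_eq_right.mpr hXN_le]
    obtain ⟨C, hC⟩ := exists_isCompl X₂
    have e1 : X ≃ₗ[Q] XN := LinearEquiv.ofInjective f hfinj
    have e2 : X₂ ≃ₗ[Q] XN :=
      (Submodule.equivMapOfInjective _ LinearMap.inr_injective X₂).trans
        (LinearEquiv.ofEq _ _ hmap₂)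
    set C' : Submodule Q (X × B') := C.map (LinearMap.inr Q X B') with hC'def
    set P1 : Submodule Q (X × B') := LinearMap.range (LinearMap.inl Q X B') with hP1def
    set P2 : Submodule Q (X × B') := LinearMap.range (LinearMap.inr Q X B') with hP2def
    have hC'le : C' ≤ P2 := Submodule.map_le_iff_le_comap.mpr
      (fun c _ => LinearMap.mem_range_self _ c)
    have hsupCX : XN ⊔ C' = P2 := by
      rw [← hmap₂, hC'def, ← Submodule.map_sup, hC.sup_eq_top, Submodule.map_top]
    have hinfCX : XN ⊓ C' = ⊥ := by
      rw [← hmap₂, hC'def, ← Submodule.map_inf _ LinearMap.inr_injective,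
        hC.inf_eq_bot, Submodule.map_bot]
    have hPinf : P1 ⊓ P2 = ⊥ := LinearMap.isCompl_range_inl_inr.inf_eq_bot
    have hPsup : P1 ⊔ P2 = ⊤ := LinearMap.isCompl_range_inl_inr.sup_eq_top
    have hdisjD : Disjoint XN (P1 ⊔ C') := by
      rw [disjoint_iff]
      have hmod : (P1 ⊔ C') ⊓ P2 = C' := by
        rw [sup_comm, sup_inf_assoc_of_le _ hC'le, hPinf, sup_bot_eq]
      have h1 : XN ⊓ (P1 ⊔ C') = XN ⊓ ((P1 ⊔ C') ⊓ P2) := by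
        rw [inf_comm (P1 ⊔ C') P2, ← inf_assoc, inf_eq_left.mpr hXN_le]
      rw [h1, hmod, hinfCX]
    have hcodD : Codisjoint XN (P1 ⊔ C') := by
      rw [codisjoint_iff, sup_left_comm, hsupCX, hPsup]
    have eP1X : P1 ≃ₗ[Q] X :=
      (LinearEquiv.ofInjective (LinearMap.inl Q X B') LinearMap.inl_injective).symm
    have eC'C : C' ≃ₗ[Q] C :=
      (Submodule.equivMapOfInjective _ LinearMap.inr_injective C).symm
    have hdisjPC : Disjoint P1 C' := by
      rw [disjoint_iff, ← le_bot_iff, ← hPinf]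
      exact le_inf inf_le_left (inf_le_right.trans hC'le)
    have eD : ↥(P1 ⊔ C') ≃ₗ[Q] (X₂ × C) :=
      (supEquivProd hdisjPC).symm.trans
        ((eP1X.trans (e1.trans e2.symm)).prodCongr eC'C)
    exact ⟨eB.trans <| qe.trans <| (quotientEquivOfIsCompl XN _ ⟨hdisjD, hcodD⟩).trans <|
      eD.trans (Submodule.prodEquivOfIsCompl X₂ C hC)⟩

end SimpleCancel

section Cancel
variable {Q : Type*} [Ring Q] [IsSemisimpleRing Q]
variable {M B B' : Type*} [AddCommGroup M] [Module Q M] [AddCommGroup B] [Module Q B]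
  [AddCommGroup B'] [Module Q B'] [IsArtinian Q M]

lemma cancelFinite (A : Submodule Q M) :
    ∀ _e : (A × B) ≃ₗ[Q] (A × B'), Nonempty (B ≃ₗ[Q] B') := by
  induction A using WellFoundedLT.induction with
  | _ A IH =>
  intro e
  rcases IsSemisimpleModule.eq_bot_or_exists_simple_le A with hbot | ⟨X, hXle, hXsimple⟩
  · subst hbot
    have mkB : (↥(⊥ : Submodule Q M) × B) ≃ₗ[Q] B :=
      LinearEquiv.ofLinear (LinearMap.snd Q _ B) (LinearMap.inr Q _ B)
        (by ext z; rfl)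
        (LinearMap.ext fun x => Prod.ext (Subsingleton.elim _ _) rfl)
    have mkB' : (↥(⊥ : Submodule Q M) × B') ≃ₗ[Q] B' :=
      LinearEquiv.ofLinear (LinearMap.snd Q _ B') (LinearMap.inr Q _ B')
        (by ext z; rfl)
        (LinearMap.ext fun x => Prod.ext (Subsingleton.elim _ _) rfl)
    exact ⟨mkB.symm.trans (e.trans mkB')⟩
  · obtain ⟨A₁, hA₁le, hinf, hsup⟩ := exists_relcompl hXle
    have hXbot : X ≠ ⊥ := by
      have hnt : Nontrivial ↥X := IsSimpleModule.nontrivial Q ↥X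
      rw [Submodule.nontrivial_iff_ne_bot] at hnt
      exact hnt
    have hlt : A₁ < A := lt_of_le_of_ne hA₁le (fun hEq => hXbot (by
      have hle' : X ≤ A₁ := hEq ▸ hXle
      exact le_bot_iff.mp (hinf ▸ le_inf le_rfl hle')))
    have hdisj : Disjoint X A₁ := disjoint_iff.mpr hinf
    have eA : ↥A ≃ₗ[Q] (↥X × ↥A₁) :=
      (LinearEquiv.ofEq A (X ⊔ A₁) hsup.symm).trans (supEquivProd hdisj).symm
    have e' : (↥X × (↥A₁ × B)) ≃ₗ[Q] (↥X × (↥A₁ × B')) :=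
      (LinearEquiv.prodAssoc Q ↥X ↥A₁ B).symm.trans <|
        ((eA.symm.prodCongr (LinearEquiv.refl Q B)).trans <|
          e.trans (eA.prodCongr (LinearEquiv.refl Q B'))).trans
            (LinearEquiv.prodAssoc Q ↥X ↥A₁ B')
    obtain ⟨e₁⟩ := cancelSimple e'
    exact IH A₁ hlt e₁

end Cancel

section SR1

lemma sr1 {Q : Type*} [Ring Q] [IsSemisimpleRing Q] (I : Ideal Q) (a : Q)
    (h : Ideal.span {a} ⊔ I = ⊤) : ∃ y ∈ I, IsUnit (a + y) := by
  classical
  set φ : Q →ₗ[Q] Q := LinearMap.toSpanSingleton Q Q a with hφdef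
  have hRa : Ideal.span {a} = LinearMap.range φ := LinearMap.span_singleton_eq_range Q Q a
  set K := LinearMap.ker φ with hKdef
  obtain ⟨C, hC⟩ := exists_isCompl K
  obtain ⟨B, hBle, hBinf, hBsup⟩ :=
    exists_relcompl (inf_le_right : Ideal.span {a} ⊓ I ≤ I)
  have hcompl2 : IsCompl (Ideal.span {a}) B := by
    constructor
    · rw [disjoint_iff, ← le_bot_iff, ← hBinf]
      exact le_inf (le_inf inf_le_left (inf_le_right.trans hBle)) inf_le_right
    · rw [codisjoint_iff, ← h, ← hBsup, ← sup_assoc,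
        sup_eq_left.mpr (inf_le_left : Ideal.span {a} ⊓ I ≤ Ideal.span {a})]
  have eC : ↥C ≃ₗ[Q] ↥(Ideal.span {a}) :=
    ((Submodule.quotientEquivOfIsCompl K C hC).symm.trans φ.quotKerEquivRange).trans
      (LinearEquiv.ofEq _ _ hRa.symm)
  have big : (↥C × ↥K) ≃ₗ[Q] (↥C × ↥B) :=
    (LinearEquiv.prodComm Q ↥C ↥K).trans <|
      (Submodule.prodEquivOfIsCompl K C hC).trans <|
        (Submodule.prodEquivOfIsCompl _ B hcompl2).symm.trans
          (eC.symm.prodCongr (LinearEquiv.refl Q ↥B))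
  obtain ⟨hKB⟩ := cancelFinite C big
  set e₁ := Submodule.prodEquivOfIsCompl K C hC with he₁def
  have he₁ : ∀ (k : ↥K) (c : ↥C), e₁ (k, c) = (k : Q) + (c : Q) := by
    intro k c
    have h := LinearMap.congr_fun (Submodule.coe_prodEquivOfIsCompl K C hC) (k, c)
    simp only [LinearEquiv.coe_coe, LinearMap.coprod_apply, Submodule.coe_subtype] at h
    exact h
  set ψ : Q →ₗ[Q] Q :=
    (LinearMap.coprod (B.subtype ∘ₗ (hKB : ↥K →ₗ[Q] ↥B)) (φ ∘ₗ C.subtype)) ∘ₗ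
      (e₁.symm : Q →ₗ[Q] ↥K × ↥C) with hψdef
  have happly : ∀ (k : ↥K) (c : ↥C),
      ψ ((k : Q) + (c : Q)) = (hKB k : Q) + φ (c : Q) := by
    intro k c
    rw [← he₁ k c]
    simp [hψdef]
  have hker : ∀ x, ψ x = 0 → x = 0 := by
    intro x hx
    obtain ⟨⟨k, c⟩, rfl⟩ : ∃ p : ↥K × ↥C, e₁ p = x := ⟨e₁.symm x, e₁.apply_symm_apply x⟩
    rw [he₁] at hx ⊢
    rw [happly] at hx
    have hmem1 : (hKB k : Q) ∈ B := (hKB k).2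
    have hmem2 : φ (c : Q) ∈ Ideal.span {a} := hRa ▸ LinearMap.mem_range_self φ (c : Q)
    have hz2 : φ (c : Q) = 0 := by
      have hneg : φ (c : Q) ∈ B := by
        have : φ (c : Q) = -(hKB k : Q) := eq_neg_of_add_eq_zero_right hx
        rw [this]; exact neg_mem hmem1
      have := hcompl2.disjoint
      rw [Submodule.disjoint_def] at this
      exact this _ hmem2 hneg
    have hz1 : (hKB k : Q) = 0 := by
      rw [hz2, add_zero] at hx; exact hx
    have hc0 : (c : Q) = 0 := by
      have hcK : (c : Q) ∈ K := LinearMap.mem_ker.mpr hz2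
      have := hC.disjoint
      rw [Submodule.disjoint_def] at this
      exact this _ hcK c.2
    have hk0 : (k : Q) = 0 := by
      have : hKB k = 0 := Subtype.ext hz1
      have hk : k = 0 := hKB.injective (by rw [this, map_zero])
      rw [hk]; rfl
    rw [hc0, hk0, add_zero]
  have hinj : Function.Injective ψ := by
    intro x y hxy
    have := hker (x - y) (by rw [map_sub, hxy, sub_self])
    exact sub_eq_zero.mp this
  have hsurj : Function.Surjective ψ := by
    intro z
    have hz : z ∈ Ideal.span {a} ⊔ B := by rw [hcompl2.sup_eq_top]; trivial
    obtain ⟨r, hr, b, hb, rfl⟩ := Submodule.mem_sup.mp hz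
    rw [hRa] at hr
    obtain ⟨t, ht⟩ := hr
    obtain ⟨⟨k₀, c₀⟩, hkc⟩ : ∃ p : ↥K × ↥C, e₁ p = t := ⟨e₁.symm t, e₁.apply_symm_apply t⟩
    rw [he₁] at hkc
    refine ⟨(hKB.symm ⟨b, hb⟩ : Q) + (c₀ : Q), ?_⟩
    rw [happly, hKB.apply_symm_apply]
    have hφk : φ (k₀ : Q) = 0 := LinearMap.mem_ker.mp k₀.2
    have hφc : φ (c₀ : Q) = r := by rw [← ht, ← hkc, map_add, hφk, zero_add]
    rw [hφc]
    exact add_comm b r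
  set Ψ := LinearEquiv.ofBijective ψ ⟨hinj, hsurj⟩ with hΨdef
  have hψmul : ∀ x : Q, ψ x = x * ψ 1 := fun x => by
    conv_lhs => rw [← mul_one x, ← smul_eq_mul, map_smul]
    rw [smul_eq_mul]
  have hsymmmul : ∀ x : Q, Ψ.symm x = x * Ψ.symm 1 := fun x => by
    conv_lhs => rw [← mul_one x, ← smul_eq_mul, map_smul]
    rw [smul_eq_mul]
  have hvu : Ψ.symm 1 * ψ 1 = 1 := by
    rw [← hψmul (Ψ.symm 1)]
    exact Ψ.apply_symm_apply 1
  have huv : ψ 1 * Ψ.symm 1 = 1 := by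
    rw [← hsymmmul (ψ 1)]
    exact Ψ.symm_apply_apply 1
  have hu : IsUnit (ψ 1) := ⟨⟨ψ 1, Ψ.symm 1, huv, hvu⟩, rfl⟩
  obtain ⟨⟨k₁, c₁⟩, hkc₁⟩ : ∃ p : ↥K × ↥C, e₁ p = 1 := ⟨e₁.symm 1, e₁.apply_symm_apply 1⟩
  rw [he₁] at hkc₁
  have hu_eq := happly k₁ c₁
  rw [hkc₁] at hu_eq
  have hφc₁ : φ (c₁ : Q) = a := by
    have hk₁ : φ (k₁ : Q) = 0 := LinearMap.mem_ker.mp k₁.2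
    have h1 : φ ((k₁ : Q) + (c₁ : Q)) = a := by
      rw [hkc₁, hφdef]
      simp
    rw [map_add, hk₁, zero_add] at h1
    exact h1
  refine ⟨(hKB k₁ : Q), hBle (hKB k₁).2, ?_⟩
  rw [add_comm, ← hφc₁, ← hu_eq]
  exact hu

end SR1

/-- Bass: Let `R` be a semilocal ring (not necessarily commutative),
`I` a left ideal of `R`, and `a ∈ R` such that `Ra + I = R`. Then the coset `a + I`
contains a unit of `R`. Semilocal means `R/rad(R)` is semisimple artinian. -/
theorem unit_in_coset_of_semilocal {R : Type*} [Ring R]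
    (hsemilocal : IsSemisimpleRing
      (RingCon.Quotient (TwoSidedIdeal.jacobson (⊥ : TwoSidedIdeal R)).ringCon))
    (I : Ideal R) (a : R) (h : Ideal.span {a} ⊔ I = ⊤) :
    ∃ x ∈ I, IsUnit (a + x) := by
  classical
  set J := TwoSidedIdeal.jacobson (⊥ : TwoSidedIdeal R) with hJdef
  set c := J.ringCon with hcdef
  set π : R →+* c.Quotient := c.mk' with hπdef
  haveI hQsemi : IsSemisimpleRing c.Quotient := hsemilocal
  have hπsurj : Function.Surjective π := fun x => Quotient.inductionOn' x fun r => ⟨r, rfl⟩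
  have hJac : ∀ x : R, x ∈ J → x ∈ Ideal.jacobson (⊥ : Ideal R) := by
    intro x hx
    have h1 : x ∈ TwoSidedIdeal.asIdeal J := TwoSidedIdeal.mem_asIdeal.mpr hx
    rw [hJdef, TwoSidedIdeal.asIdeal_jacobson] at h1
    have hbot : TwoSidedIdeal.asIdeal (⊥ : TwoSidedIdeal R) = (⊥ : Ideal R) := by
      ext z
      rw [TwoSidedIdeal.mem_asIdeal, TwoSidedIdeal.mem_bot, Submodule.mem_bot]
    rwa [hbot] at h1
  have hker : ∀ x : R, π x = 0 → x ∈ Ideal.jacobson (⊥ : Ideal R) := by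
    intro x hx
    refine hJac x ?_
    have h0 : (x : c.Quotient) = ((0 : R) : c.Quotient) := by
      change π x = π 0
      rw [hx, map_zero]
    exact (TwoSidedIdeal.mem_iff J x).mpr ((RingCon.eq c).mp h0)
  have hunit1 : ∀ j ∈ Ideal.jacobson (⊥ : Ideal R), IsUnit (1 + j) := by
    intro j hj
    obtain ⟨s, hs⟩ := Ideal.exists_mul_sub_mem_of_sub_one_mem_jacobson (1 + j)
      (by simpa using hj)
    rw [Submodule.mem_bot, sub_eq_zero] at hs
    have hsj : s - 1 ∈ Ideal.jacobson (⊥ : Ideal R) := by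
      have hexp : s + s * j = 1 := by rw [← hs, mul_add, mul_one]
      have h1 : s - 1 = -(s * j) := by rw [← hexp]; abel
      rw [h1]
      exact neg_mem (Ideal.mul_mem_left _ s hj)
    obtain ⟨t, ht⟩ := Ideal.exists_mul_sub_mem_of_sub_one_mem_jacobson s hsj
    rw [Submodule.mem_bot, sub_eq_zero] at ht
    have hts : t = 1 + j := by
      calc t = t * (s * (1 + j)) := by rw [hs, mul_one]
      _ = (t * s) * (1 + j) := by rw [mul_assoc]
      _ = 1 + j := by rw [ht, one_mul]
    exact ⟨⟨1 + j, s, by rw [← hts]; exact ht, hs⟩, rfl⟩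
  have hlift : ∀ v : R, IsUnit (π v) → IsUnit v := by
    intro v hv
    obtain ⟨u, hu⟩ := hv
    obtain ⟨w, hw⟩ := hπsurj (↑u⁻¹)
    have h1 : π (v * w) = 1 := by rw [map_mul, ← hu, hw]; exact u.mul_inv
    have h2 : π (w * v) = 1 := by rw [map_mul, hw, ← hu]; exact u.inv_mul
    have hj1 : v * w - 1 ∈ Ideal.jacobson (⊥ : Ideal R) :=
      hker _ (by rw [map_sub, h1, map_one, sub_self])
    have hj2 : w * v - 1 ∈ Ideal.jacobson (⊥ : Ideal R) :=
      hker _ (by rw [map_sub, h2, map_one, sub_self])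
    have hu1 : IsUnit (v * w) := by
      have := hunit1 _ hj1
      simpa using this
    have hu2 : IsUnit (w * v) := by
      have := hunit1 _ hj2
      simpa using this
    obtain ⟨u1, hu1'⟩ := hu1
    obtain ⟨u2, hu2'⟩ := hu2
    have hr : v * (w * ↑u1⁻¹) = 1 := by
      rw [← mul_assoc, ← hu1']; exact u1.mul_inv
    have hl : (↑u2⁻¹ * w) * v = 1 := by
      rw [mul_assoc, ← hu2']; exact u2.inv_mul
    refine ⟨⟨v, w * ↑u1⁻¹, hr, ?_⟩, rfl⟩
    have heq : w * ↑u1⁻¹ = ↑u2⁻¹ * w := by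
      calc w * ↑u1⁻¹ = ((↑u2⁻¹ * w) * v) * (w * ↑u1⁻¹) := by rw [hl, one_mul]
      _ = (↑u2⁻¹ * w) * (v * (w * ↑u1⁻¹)) := by rw [mul_assoc]
      _ = ↑u2⁻¹ * w := by rw [hr, mul_one]
    rw [heq]
    exact hl
  have h1mem : (1 : R) ∈ Ideal.span {a} ⊔ I := by rw [h]; trivial
  obtain ⟨r, hrmem, s, hsmem, hrs⟩ := Submodule.mem_sup.mp h1mem
  obtain ⟨t, ht⟩ := Submodule.mem_span_singleton.mp hrmem
  have htop : Ideal.span {π a} ⊔ Ideal.map π I = ⊤ := by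
    rw [Ideal.eq_top_iff_one]
    refine Submodule.mem_sup.mpr ⟨π r, ?_, π s, Ideal.mem_map_of_mem π hsmem, ?_⟩
    · refine Submodule.mem_span_singleton.mpr ⟨π t, ?_⟩
      rw [← ht, smul_eq_mul, smul_eq_mul, map_mul]
    · rw [← map_add, hrs, map_one]
  obtain ⟨ybar, hymem, hyunit⟩ := sr1 (Ideal.map π I) (π a) htop
  obtain ⟨y, hyI, hy⟩ := (Ideal.mem_map_iff_of_surjective π hπsurj).mp hymem
  refine ⟨y, hyI, hlift _ ?_⟩
  rw [map_add, hy]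
  exact hyunit
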